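/- For a positive integer N, define kappa(N) = (N / rad(N)) * prod_{p | N} (p^2 - 1), where rad(N) is the product of the distinct primes dividing N (with kappa(1) = 1). Then 24 divides kappa(N) if and only if N is not one of 1, 2, 3, 4, 8. -/
import Mathlib

lemma aux24 {p : ℕ} (hp : p.Prime) (h5 : 5 ≤ p) : 24 ∣ p ^ 2 - 1 := by
  have h2 : p % 2 = 1 := by
    rcases Nat.mod_two_eq_zero_or_one p with h | h
    · exfalso
      have := (Nat.prime_dvd_prime_iff_eq Nat.prime_two hp).mp (Nat.dvd_of_mod_eq_zero h)
      omega
    · exact h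
  have h3 : p % 3 ≠ 0 := by
    intro h
    have := (Nat.prime_dvd_prime_iff_eq Nat.prime_three hp).mp (Nat.dvd_of_mod_eq_zero h)
    omega
  have hm : p ^ 2 % 24 = (p % 24) ^ 2 % 24 := Nat.pow_mod p 2 24
  have h2' : p % 24 % 2 = 1 := by rw [Nat.mod_mod_of_dvd p (by norm_num)]; exact h2
  have h3' : p % 24 % 3 ≠ 0 := by rw [Nat.mod_mod_of_dvd p (by norm_num)]; exact h3
  have hlt : p % 24 < 24 := Nat.mod_lt _ (by norm_num)
  have h1 : p ^ 2 % 24 = 1 := by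
    rw [hm]
    interval_cases h : p % 24 <;> simp_all
  have hp2 : 1 ≤ p ^ 2 := Nat.one_le_pow _ _ (by omega)
  omega

theorem twentyFour_dvd_kappa_iff (N : ℕ) (hN : 0 < N) :
    24 ∣ (N / ∏ p ∈ N.primeFactors, p) * ∏ p ∈ N.primeFactors, (p ^ 2 - 1) ↔
      N ∉ ({1, 2, 3, 4, 8} : Finset ℕ) := by
  constructor
  · intro h hmem
    fin_cases hmem <;> revert h
    · simp
    · rw [Nat.Prime.primeFactors Nat.prime_two]; decide
    · rw [Nat.Prime.primeFactors Nat.prime_three]; decide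
    · rw [show (4:ℕ) = 2^2 by norm_num, Nat.primeFactors_prime_pow (by norm_num) Nat.prime_two]; decide
    · rw [show (8:ℕ) = 2^3 by norm_num, Nat.primeFactors_prime_pow (by norm_num) Nat.prime_two]; decide
  · intro hmem
    simp only [Finset.mem_insert, Finset.mem_singleton] at hmem
    push_neg at hmem
    obtain ⟨hm1, hm2, hm3, hm4, hm8⟩ := hmem
    by_cases h5 : ∃ p ∈ N.primeFactors, 5 ≤ p
    · obtain ⟨p, hp, hp5⟩ := h5
      exact Dvd.dvd.mul_left
        (dvd_trans (aux24 (Nat.prime_of_mem_primeFactors hp) hp5)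
          (Finset.dvd_prod_of_mem (fun p => p^2-1) hp)) _
    · push_neg at h5
      by_cases h2 : 2 ∈ N.primeFactors <;> by_cases h3 : 3 ∈ N.primeFactors
      · have hpf : N.primeFactors = {2, 3} := by
          ext q
          simp only [Finset.mem_insert, Finset.mem_singleton]
          constructor
          · intro hq
            have hq5 := h5 q hq
            have hqp := Nat.prime_of_mem_primeFactors hq
            have := hqp.two_le
            interval_cases q <;> simp_all <;> norm_num at hqp
          · rintro (rfl | rfl) <;> assumption
        rw [hpf]
        exact Dvd.dvd.mul_left (by norm_num) _
      · -- only 2: N = 2^k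
        have key : ∀ {d : ℕ}, d.Prime → d ∣ N → d = 2 := by
          intro d hd hdvd
          have hdm : d ∈ N.primeFactors := Nat.mem_primeFactors.mpr ⟨hd, hdvd, hN.ne'⟩
          have := h5 d hdm
          have := hd.two_le
          interval_cases d
          · rfl
          · exact absurd hdm h3
          · norm_num at hd
        obtain ⟨k, hNk⟩ : ∃ k, N = 2 ^ k := ⟨_, Nat.eq_prime_pow_of_unique_prime_dvd hN.ne' key⟩
        have hk4 : 4 ≤ k := by
          by_contra h
          interval_cases k <;> norm_num at hNk <;> omega
        rw [hNk, Nat.primeFactors_prime_pow (by omega) Nat.prime_two]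
        simp only [Finset.prod_singleton]
        have hdiv : 2 ^ k / 2 = 2 ^ (k - 1) := by
          rw [← Nat.pow_div (by omega) (by norm_num), pow_one]
        rw [hdiv]
        have h8 : 2 ^ 3 ∣ 2 ^ (k - 1) := pow_dvd_pow 2 (by omega)
        calc (24 : ℕ) = 2 ^ 3 * (2 ^ 2 - 1) := by norm_num
          _ ∣ 2 ^ (k - 1) * (2 ^ 2 - 1) := mul_dvd_mul h8 dvd_rfl
      · -- only 3: N = 3^k
        have key : ∀ {d : ℕ}, d.Prime → d ∣ N → d = 3 := by
          intro d hd hdvd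
          have hdm : d ∈ N.primeFactors := Nat.mem_primeFactors.mpr ⟨hd, hdvd, hN.ne'⟩
          have := h5 d hdm
          have := hd.two_le
          interval_cases d
          · exact absurd hdm h2
          · rfl
          · norm_num at hd
        obtain ⟨k, hNk⟩ : ∃ k, N = 3 ^ k := ⟨_, Nat.eq_prime_pow_of_unique_prime_dvd hN.ne' key⟩
        have hk2 : 2 ≤ k := by
          by_contra h
          interval_cases k <;> norm_num at hNk <;> omega
        rw [hNk, Nat.primeFactors_prime_pow (by omega) Nat.prime_three]
        simp only [Finset.prod_singleton]
        have hdiv : 3 ^ k / 3 = 3 ^ (k - 1) := by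
          rw [← Nat.pow_div (by omega) (by norm_num), pow_one]
        rw [hdiv]
        have h3' : 3 ^ 1 ∣ 3 ^ (k - 1) := pow_dvd_pow 3 (by omega)
        calc (24 : ℕ) = 3 ^ 1 * (3 ^ 2 - 1) := by norm_num
          _ ∣ 3 ^ (k - 1) * (3 ^ 2 - 1) := mul_dvd_mul h3' dvd_rfl
      · -- no prime factors: N = 1
        exfalso
        have hpf : N.primeFactors = ∅ := by
          ext q
          simp only [Finset.notMem_empty, iff_false]
          intro hq
          have hq5 := h5 q hq
          have hqp := Nat.prime_of_mem_primeFactors hq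
          have := hqp.two_le
          interval_cases q <;> simp_all <;> norm_num at hqp
        exact hm1 ((Nat.primeFactors_eq_empty.mp hpf).resolve_left hN.ne')
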